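/- Every rank 2 element of the cone 𝒞 is a sum of two rank 1 elements of the prescribed form: if A ∈ 𝒞 has rank 2, then there exist real numbers x, y, z and x̂, ŷ, ẑ such that A = v(x,y,z) v(x,y,z)^⊤ + v(x̂,ŷ,ẑ) v(x̂,ŷ,ẑ)^⊤. -/

import Mathlib

open Matrix

/-- The vector `v(x,y,z) = (x², xy, xz, y², yz, z²)ᵀ ∈ ℝ⁶`. -/
def v (x y z : ℝ) : Fin 6 → ℝ := ![x ^ 2, x * y, x * z, y ^ 2, y * z, z ^ 2]

/-- Membership in the cone 𝒞 of 6×6 real positive semidefinite matrices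
satisfying `a₁₄ = a₂₂`, `a₁₅ = a₂₃`, `a₁₆ = a₃₃`, `a₂₅ = a₃₄`, `a₂₆ = a₃₅`,
`a₄₆ = a₅₅` (1-based indexing). -/
def memC (A : Matrix (Fin 6) (Fin 6) ℝ) : Prop :=
  A.PosSemidef ∧ A 0 3 = A 1 1 ∧ A 0 4 = A 1 2 ∧ A 0 5 = A 2 2 ∧
    A 1 4 = A 2 3 ∧ A 1 5 = A 2 4 ∧ A 3 5 = A 4 4


/-- cofactor vector of the symmetric matrix [[p0,p1,p2],[p1,p3,p4],[p2,p4,p5]] -/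
def cof (p : Fin 6 → ℝ) : Fin 6 → ℝ :=
  ![p 3 * p 5 - p 4 ^ 2, p 2 * p 4 - p 1 * p 5, p 1 * p 4 - p 2 * p 3,
    p 0 * p 5 - p 2 ^ 2, p 1 * p 2 - p 0 * p 4, p 0 * p 3 - p 1 ^ 2]

def det3 (p : Fin 6 → ℝ) : ℝ :=
  p 0 * p 3 * p 5 + 2 * (p 1 * p 4 * p 2) - p 0 * p 4 ^ 2 - p 3 * p 2 ^ 2 - p 5 * p 1 ^ 2

lemma cof0 (p : Fin 6 → ℝ) : cof p 0 = p 3 * p 5 - p 4 ^ 2 := rfl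
lemma cof1 (p : Fin 6 → ℝ) : cof p 1 = p 2 * p 4 - p 1 * p 5 := rfl
lemma cof2 (p : Fin 6 → ℝ) : cof p 2 = p 1 * p 4 - p 2 * p 3 := rfl
lemma cof3 (p : Fin 6 → ℝ) : cof p 3 = p 0 * p 5 - p 2 ^ 2 := rfl
lemma cof4 (p : Fin 6 → ℝ) : cof p 4 = p 1 * p 2 - p 0 * p 4 := rfl
lemma cof5 (p : Fin 6 → ℝ) : cof p 5 = p 0 * p 3 - p 1 ^ 2 := rfl

/-- det(adj) = det²  -/
lemma det3_cof (p : Fin 6 → ℝ) : det3 (cof p) = det3 p ^ 2 := by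
  simp only [det3, cof0, cof1, cof2, cof3, cof4, cof5]; ring

/-- adj(adj) = det • id -/
lemma cof_cof (p : Fin 6 → ℝ) : ∀ k, cof (cof p) k = det3 p * p k := by
  have h0 : cof (cof p) 0 = det3 p * p 0 := by
    simp only [cof0, cof1, cof2, cof3, cof4, cof5, det3]; ring
  have h1 : cof (cof p) 1 = det3 p * p 1 := by
    simp only [cof0, cof1, cof2, cof3, cof4, cof5, det3]; ring
  have h2 : cof (cof p) 2 = det3 p * p 2 := by
    simp only [cof0, cof1, cof2, cof3, cof4, cof5, det3]; ring
  have h3 : cof (cof p) 3 = det3 p * p 3 := by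
    simp only [cof0, cof1, cof2, cof3, cof4, cof5, det3]; ring
  have h4 : cof (cof p) 4 = det3 p * p 4 := by
    simp only [cof0, cof1, cof2, cof3, cof4, cof5, det3]; ring
  have h5 : cof (cof p) 5 = det3 p * p 5 := by
    simp only [cof0, cof1, cof2, cof3, cof4, cof5, det3]; ring
  intro k; fin_cases k
  exacts [h0, h1, h2, h3, h4, h5]

/-- polarization of adjugate on pencils -/
lemma cof_pencil (u w : Fin 6 → ℝ) (c s : ℝ) :
    ∀ k, cof (fun i => c * u i + s * w i) k =
      c ^ 2 * cof u k + c * s * (cof (fun i => u i + w i) k - cof u k - cof w k)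
        + s ^ 2 * cof w k := by
  have h0 : cof (fun i => c * u i + s * w i) 0 = c ^ 2 * cof u 0 + c * s * (cof (fun i => u i + w i) 0 - cof u 0 - cof w 0) + s ^ 2 * cof w 0 := by
    simp only [cof0, cof1, cof2, cof3, cof4, cof5, det3]; ring
  have h1 : cof (fun i => c * u i + s * w i) 1 = c ^ 2 * cof u 1 + c * s * (cof (fun i => u i + w i) 1 - cof u 1 - cof w 1) + s ^ 2 * cof w 1 := by
    simp only [cof0, cof1, cof2, cof3, cof4, cof5, det3]; ring
  have h2 : cof (fun i => c * u i + s * w i) 2 = c ^ 2 * cof u 2 + c * s * (cof (fun i => u i + w i) 2 - cof u 2 - cof w 2) + s ^ 2 * cof w 2 := by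
    simp only [cof0, cof1, cof2, cof3, cof4, cof5, det3]; ring
  have h3 : cof (fun i => c * u i + s * w i) 3 = c ^ 2 * cof u 3 + c * s * (cof (fun i => u i + w i) 3 - cof u 3 - cof w 3) + s ^ 2 * cof w 3 := by
    simp only [cof0, cof1, cof2, cof3, cof4, cof5, det3]; ring
  have h4 : cof (fun i => c * u i + s * w i) 4 = c ^ 2 * cof u 4 + c * s * (cof (fun i => u i + w i) 4 - cof u 4 - cof w 4) + s ^ 2 * cof w 4 := by
    simp only [cof0, cof1, cof2, cof3, cof4, cof5, det3]; ring
  have h5 : cof (fun i => c * u i + s * w i) 5 = c ^ 2 * cof u 5 + c * s * (cof (fun i => u i + w i) 5 - cof u 5 - cof w 5) + s ^ 2 * cof w 5 := by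
    simp only [cof0, cof1, cof2, cof3, cof4, cof5, det3]; ring
  intro k; fin_cases k
  exacts [h0, h1, h2, h3, h4, h5]

def T (a b : Fin 6 → ℝ) : ℝ :=
  a 0 * b 0 + a 3 * b 3 + a 5 * b 5 + 2 * (a 1 * b 1 + a 2 * b 2 + a 4 * b 4)

lemma det3_pencil (u w : Fin 6 → ℝ) (c s : ℝ) :
    det3 (fun i => c * u i + s * w i) =
      c ^ 3 * det3 u + c ^ 2 * s * T (cof u) w + c * s ^ 2 * T (cof w) u + s ^ 3 * det3 w := by
  simp only [det3, T, cof0, cof1, cof2, cof3, cof4, cof5]; ring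

lemma T_cof_self (p : Fin 6 → ℝ) : T (cof p) p = 3 * det3 p := by
  simp only [det3, T, cof0, cof1, cof2, cof3, cof4, cof5]; ring

lemma T_linear_left (a b q : Fin 6 → ℝ) (h : ∀ k, a k = - b k) : T a q = - T b q := by
  simp only [T, h]; ring

lemma rank1_scalar (a b c d e f : ℝ) (h1 : a * d = b ^ 2) (h2 : a * e = b * c)
    (h3 : a * f = c ^ 2) (h4 : b * e = c * d) (h5 : b * f = c * e) (h6 : d * f = e ^ 2) :
    ∃ x y z ε : ℝ, ε ^ 2 = 1 ∧ a = ε * x ^ 2 ∧ b = ε * (x * y) ∧ c = ε * (x * z) ∧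
      d = ε * y ^ 2 ∧ e = ε * (y * z) ∧ f = ε * z ^ 2 := by
  by_cases ha : a ≠ 0
  · have habs : |a| ≠ 0 := abs_ne_zero.mpr ha
    set x := Real.sqrt |a| with hxdef
    have hx : x ^ 2 = |a| := Real.sq_sqrt (abs_nonneg _)
    have hsq : |a| * |a| = a * a := abs_mul_abs_self a
    refine ⟨x, b * x / a, c * x / a, a / |a|,
      by rw [div_pow, sq_abs]; exact div_self (pow_ne_zero _ ha), ?_, ?_, ?_, ?_, ?_, ?_⟩
    · rw [hx]; exact (div_mul_cancel₀ a habs).symm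
    · field_simp
      linear_combination (-b) * hx
    · field_simp
      linear_combination (-c) * hx
    · field_simp
      linear_combination |a| * h1 - b^2 * hx
    · field_simp
      linear_combination |a| * h2 - (b*c) * hx
    · field_simp
      linear_combination |a| * h3 - c^2 * hx
  · push_neg at ha
    have hb : b = 0 := by
      have h := h1.symm; rw [ha, zero_mul] at h; exact pow_eq_zero_iff two_ne_zero |>.mp h
    have hc : c = 0 := by
      have h := h3.symm; rw [ha, zero_mul] at h; exact pow_eq_zero_iff two_ne_zero |>.mp h
    by_cases hd : d ≠ 0
    · have habs : |d| ≠ 0 := abs_ne_zero.mpr hd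
      set y := Real.sqrt |d| with hydef
      have hy : y ^ 2 = |d| := Real.sq_sqrt (abs_nonneg _)
      have hsq : |d| * |d| = d * d := abs_mul_abs_self d
      refine ⟨0, y, e * y / d, d / |d|,
        by rw [div_pow, sq_abs]; exact div_self (pow_ne_zero _ hd), by simp [ha], by simp [hb],
        by simp [hc], ?_, ?_, ?_⟩
      · rw [hy]; exact (div_mul_cancel₀ d habs).symm
      · field_simp
        linear_combination (-e) * hy
      · field_simp
        linear_combination |d| * h6 - e^2 * hy
    · push_neg at hd
      have he : e = 0 := by
        have h := h6.symm; rw [hd, zero_mul] at h; exact pow_eq_zero_iff two_ne_zero |>.mp h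
      rcases le_or_gt 0 f with hf | hf
      · refine ⟨0, 0, Real.sqrt f, 1, one_pow 2, by simp [ha], by simp [hb], by simp [hc],
          by simp [hd], by simp [he], by rw [Real.sq_sqrt hf]; ring⟩
      · refine ⟨0, 0, Real.sqrt (-f), -1, by ring, by simp [ha], by simp [hb], by simp [hc],
          by simp [hd], by simp [he], by rw [Real.sq_sqrt (by linarith)]; ring⟩


lemma psd_rank_two_decomp (A : Matrix (Fin 6) (Fin 6) ℝ) (hA : A.PosSemidef)
    (hr : A.rank = 2) : ∃ u w : Fin 6 → ℝ, ∀ i j, A i j = u i * u j + w i * w j := by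
  obtain ⟨B, hB⟩ : ∃ B : Matrix (Fin 6) (Fin 6) ℝ, A = Bᴴ * B := by
    open scoped MatrixOrder in
    exact CStarAlgebra.nonneg_iff_eq_star_mul_self.mp hA.nonneg
  have hBr : Bᵀ.rank = 2 := by
    rw [Matrix.rank_transpose]
    rw [hB, Matrix.rank_conjTranspose_mul_self] at hr
    exact hr
  have hV : Module.finrank ℝ (LinearMap.range (Bᵀ).mulVecLin) = 2 := hBr
  let bV : Module.Basis (Fin 2) ℝ (LinearMap.range (Bᵀ).mulVecLin) :=
    Module.finBasisOfFinrankEq ℝ _ hV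
  set u₀ : Fin 6 → ℝ := (bV 0 : Fin 6 → ℝ) with hu₀
  set w₀ : Fin 6 → ℝ := (bV 1 : Fin 6 → ℝ) with hw₀
  have hmem : ∀ k, (fun i => B k i) ∈ LinearMap.range (Bᵀ).mulVecLin := by
    intro k
    refine ⟨Pi.single k 1, ?_⟩
    funext i
    simp [Matrix.mulVecLin_apply, Matrix.mulVec_single]
  set α : Fin 6 → ℝ := fun k => bV.repr ⟨fun i => B k i, hmem k⟩ 0 with hα
  set β : Fin 6 → ℝ := fun k => bV.repr ⟨fun i => B k i, hmem k⟩ 1 with hβ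
  have hrepr : ∀ k i, B k i = α k * u₀ i + β k * w₀ i := by
    intro k i
    have h := bV.sum_repr ⟨fun i => B k i, hmem k⟩
    rw [Fin.sum_univ_two] at h
    have h2 := congrArg (Subtype.val) h
    have h3 := congrFun h2 i
    simpa [hu₀, hw₀, hα, hβ, mul_comm] using h3.symm
  set P : ℝ := ∑ k, α k ^ 2 with hP
  set Q : ℝ := ∑ k, α k * β k with hQ
  set R : ℝ := ∑ k, β k ^ 2 with hR
  have hAij : ∀ i j, A i j =
      P * (u₀ i * u₀ j) + Q * (u₀ i * w₀ j + w₀ i * u₀ j) + R * (w₀ i * w₀ j) := by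
    intro i j
    rw [hB, Matrix.mul_apply]
    simp only [Matrix.conjTranspose_apply, star_trivial]
    calc ∑ k, B k i * B k j
        = ∑ k, (α k ^ 2 * (u₀ i * u₀ j) + α k * β k * (u₀ i * w₀ j + w₀ i * u₀ j)
            + β k ^ 2 * (w₀ i * w₀ j)) :=
          Finset.sum_congr rfl (fun k _ => by rw [hrepr k i, hrepr k j]; ring)
      _ = P * (u₀ i * u₀ j) + Q * (u₀ i * w₀ j + w₀ i * u₀ j) + R * (w₀ i * w₀ j) := by
          rw [Finset.sum_add_distrib, Finset.sum_add_distrib,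
            ← Finset.sum_mul, ← Finset.sum_mul, ← Finset.sum_mul]
  have hPnn : 0 ≤ P := Finset.sum_nonneg fun k _ => sq_nonneg _
  have hRnn : 0 ≤ R := Finset.sum_nonneg fun k _ => sq_nonneg _
  have hCS : Q ^ 2 ≤ P * R := Finset.sum_mul_sq_le_sq_mul_sq Finset.univ α β
  by_cases hP0 : P = 0
  · have hQ0 : Q = 0 := by
      have : Q ^ 2 ≤ 0 := by rw [hP0] at hCS; linarith
      nlinarith [sq_nonneg Q]
    refine ⟨fun i => Real.sqrt R * w₀ i, fun _ => 0, fun i j => ?_⟩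
    rw [hAij i j, hP0, hQ0]
    have h : Real.sqrt R * Real.sqrt R = R := Real.mul_self_sqrt hRnn
    linear_combination (-(w₀ i * w₀ j)) * h
  · have hPpos : 0 < P := lt_of_le_of_ne hPnn (Ne.symm hP0)
    set sp := Real.sqrt P with hspdef
    have hsp : sp ^ 2 = P := Real.sq_sqrt hPnn
    have hsp0 : sp ≠ 0 := by positivity
    set st := Real.sqrt ((P * R - Q ^ 2) / P) with hstdef
    have hst : st ^ 2 = (P * R - Q ^ 2) / P :=
      Real.sq_sqrt (div_nonneg (by linarith) hPnn)
    have hq : sp * (Q / sp) = Q := by field_simp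
    have hkst : (Q / sp) ^ 2 + st ^ 2 = R := by
      rw [hst, div_pow, hsp]
      field_simp
      ring
    refine ⟨fun i => sp * u₀ i + Q / sp * w₀ i, fun i => st * w₀ i, fun i j => ?_⟩
    rw [hAij i j]
    linear_combination (-(u₀ i * u₀ j)) * hsp - (u₀ i * w₀ j + w₀ i * u₀ j) * hq
      - (w₀ i * w₀ j) * hkst

lemma cof_smul (φ : ℝ) (q : Fin 6 → ℝ) : ∀ k, cof (fun i => φ * q i) k = φ ^ 2 * cof q k := by
  have h0 : cof (fun i => φ * q i) 0 = φ ^ 2 * cof q 0 := by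
    simp only [cof0]; ring
  have h1 : cof (fun i => φ * q i) 1 = φ ^ 2 * cof q 1 := by
    simp only [cof1]; ring
  have h2 : cof (fun i => φ * q i) 2 = φ ^ 2 * cof q 2 := by
    simp only [cof2]; ring
  have h3 : cof (fun i => φ * q i) 3 = φ ^ 2 * cof q 3 := by
    simp only [cof3]; ring
  have h4 : cof (fun i => φ * q i) 4 = φ ^ 2 * cof q 4 := by
    simp only [cof4]; ring
  have h5 : cof (fun i => φ * q i) 5 = φ ^ 2 * cof q 5 := by
    simp only [cof5]; ring
  intro k; fin_cases k
  exacts [h0, h1, h2, h3, h4, h5]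

lemma pencil_exists (u w : Fin 6 → ℝ) (hcof : ∀ k, cof u k = - cof w k) :
    ∃ c s : ℝ, c ^ 2 + s ^ 2 = 1 ∧ (∀ k, cof (fun i => c * u i + s * w i) k = 0) ∧
      (∀ k, cof (fun i => -s * u i + c * w i) k = 0) := by
  have hwk : ∀ k, cof w k = - cof u k := fun k => by rw [hcof k]; ring
  -- both determinants vanish
  have hdw2 : det3 (cof w) = - det3 (cof u) := by
    simp only [det3, hwk]; ring
  have hsqs : det3 u ^ 2 + det3 w ^ 2 = 0 := by
    have h1 := det3_cof w
    have h2 := det3_cof u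
    rw [hdw2, h2] at h1
    linarith
  have hdu : det3 u = 0 := by nlinarith [sq_nonneg (det3 u), sq_nonneg (det3 w)]
  have hdw : det3 w = 0 := by nlinarith [sq_nonneg (det3 u), sq_nonneg (det3 w)]
  -- trace terms vanish
  have hTuw : T (cof u) w = 0 := by
    rw [T_linear_left (cof u) (cof w) w hcof, T_cof_self, hdw]; ring
  have hTwu : T (cof w) u = 0 := by
    rw [T_linear_left (cof w) (cof u) u hwk, T_cof_self, hdu]; ring
  -- pencil determinant vanishes
  have hdp : ∀ c s : ℝ, det3 (fun i => c * u i + s * w i) = 0 := by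
    intro c s; rw [det3_pencil, hdu, hdw, hTuw, hTwu]; ring
  set ee : Fin 6 → ℝ := cof u with hee
  set dd : Fin 6 → ℝ := cof (fun i => u i + w i) with hdd
  have hG : ∀ c s : ℝ, ∀ k, cof (fun i => c * u i + s * w i) k
      = (c ^ 2 - s ^ 2) * ee k + (c * s) * dd k := by
    intro c s k
    rw [cof_pencil u w c s k, hwk k]
    ring
  -- adj(adj(pencil)) = 0
  have haa : ∀ c s : ℝ, ∀ k, cof (cof (fun i => c * u i + s * w i)) k = 0 := by
    intro c s k
    rw [cof_cof _ k, hdp]; ring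
  -- cof ee = 0
  have hE : ∀ k, cof ee k = 0 := fun k => by
    rw [hee, cof_cof _ k, hdu]; ring
  -- cof dd = 0
  have hD : ∀ k, cof dd k = 0 := by
    intro k
    rw [hdd, cof_cof _ k]
    have h11 : det3 (fun i => u i + w i) = 0 := by
      have harg : (fun i => u i + w i) = (fun i => (1:ℝ) * u i + (1:ℝ) * w i) := by
        funext i; ring
      rw [harg, hdp]
    rw [h11]; ring
  -- cof (ee + dd) = 0  via golden ratio instance
  have hED : ∀ k, cof (fun i => ee i + dd i) k = 0 := by
    have h5 : Real.sqrt 5 ^ 2 = 5 := Real.sq_sqrt (by norm_num)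
    set φ : ℝ := (1 + Real.sqrt 5) / 2 with hφdef
    have hφ : φ ^ 2 - 1 = φ := by rw [hφdef]; linear_combination (1/4) * h5
    have hφpos : 0 < φ := by
      have := Real.sqrt_nonneg 5; rw [hφdef]; linarith
    intro k
    have h := haa φ 1 k
    have harg : cof (fun i => φ * u i + 1 * w i)
        = (fun i => φ * ((fun j => ee j + dd j) i)) := by
      funext k'
      rw [hG φ 1 k']
      have h1 : φ ^ 2 - 1 ^ 2 = φ := by rw [one_pow]; exact hφ
      rw [h1]; ring
    rw [harg] at h
    have h2 := cof_smul φ (fun j => ee j + dd j) k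
    rw [h2] at h
    have hφ2 : φ ^ 2 ≠ 0 := by positivity
    exact (mul_eq_zero.mp h).resolve_left hφ2
  by_cases hE0 : ∀ k, ee k = 0
  · refine ⟨1, 0, by norm_num, ?_, ?_⟩
    · intro k
      have harg : (fun i => (1:ℝ) * u i + (0:ℝ) * w i) = u := by funext i; ring
      rw [harg]
      exact hE0 k
    · intro k
      have harg : (fun i => -(0:ℝ) * u i + (1:ℝ) * w i) = w := by funext i; ring
      rw [harg, hwk k]
      have : cof u k = ee k := rfl
      simp [hE0 k]
  · push_neg at hE0
    obtain ⟨k0, hk0⟩ := hE0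
    obtain ⟨x, y, z, ε, hεsq, he0, he1, he2, he3, he4, he5⟩ :=
      rank1_scalar (ee 0) (ee 1) (ee 2) (ee 3) (ee 4) (ee 5)
        (by have := hE 5; rw [cof5] at this; linarith)
        (by have := hE 4; rw [cof4] at this; linarith)
        (by have := hE 3; rw [cof3] at this; linarith)
        (by have := hE 2; rw [cof2] at this; linarith)
        (by have := hE 1; rw [cof1] at this; linarith)
        (by have := hE 0; rw [cof0] at this; linarith)
    obtain ⟨x', y', z', δ, hδsq, hd0, hd1, hd2, hd3, hd4, hd5⟩ :=
      rank1_scalar (dd 0) (dd 1) (dd 2) (dd 3) (dd 4) (dd 5)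
        (by have := hD 5; rw [cof5] at this; linarith)
        (by have := hD 4; rw [cof4] at this; linarith)
        (by have := hD 3; rw [cof3] at this; linarith)
        (by have := hD 2; rw [cof2] at this; linarith)
        (by have := hD 1; rw [cof1] at this; linarith)
        (by have := hD 0; rw [cof0] at this; linarith)
    have hεδ : ε * δ ≠ 0 := by
      intro h
      rcases mul_eq_zero.mp h with h | h
      · rw [h] at hεsq; norm_num at hεsq
      · rw [h] at hδsq; norm_num at hδsq
    -- cross products vanish
    have hcr1 : x * y' - x' * y = 0 := by
      have h := hED 5
      rw [cof5] at h
      rw [he0, he1, he3, hd0, hd1, hd3] at h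
      have key : ε * δ * (x * y' - x' * y) ^ 2 = 0 := by linear_combination h
      have := (mul_eq_zero.mp key).resolve_left hεδ
      exact pow_eq_zero_iff two_ne_zero |>.mp this
    have hcr2 : x * z' - x' * z = 0 := by
      have h := hED 3
      rw [cof3] at h
      rw [he0, he2, he5, hd0, hd2, hd5] at h
      have key : ε * δ * (x * z' - x' * z) ^ 2 = 0 := by linear_combination h
      have := (mul_eq_zero.mp key).resolve_left hεδ
      exact pow_eq_zero_iff two_ne_zero |>.mp this
    have hcr3 : y * z' - y' * z = 0 := by
      have h := hED 0
      rw [cof0] at h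
      rw [he3, he4, he5, hd3, hd4, hd5] at h
      have key : ε * δ * (y * z' - y' * z) ^ 2 = 0 := by linear_combination h
      have := (mul_eq_zero.mp key).resolve_left hεδ
      exact pow_eq_zero_iff two_ne_zero |>.mp this
    -- the base point is nonzero
    have hxyz : x ^ 2 + y ^ 2 + z ^ 2 ≠ 0 := by
      intro h0
      have hx : x = 0 := pow_eq_zero_iff two_ne_zero |>.mp
        (le_antisymm (by linarith [sq_nonneg y, sq_nonneg z]) (sq_nonneg x))
      have hy : y = 0 := pow_eq_zero_iff two_ne_zero |>.mp
        (le_antisymm (by linarith [sq_nonneg x, sq_nonneg z]) (sq_nonneg y))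
      have hz : z = 0 := pow_eq_zero_iff two_ne_zero |>.mp
        (le_antisymm (by linarith [sq_nonneg x, sq_nonneg y]) (sq_nonneg z))
      apply hk0
      fin_cases k0
      · show ee 0 = 0; rw [he0, hx]; ring
      · show ee 1 = 0; rw [he1, hx]; ring
      · show ee 2 = 0; rw [he2, hx]; ring
      · show ee 3 = 0; rw [he3, hy]; ring
      · show ee 4 = 0; rw [he4, hy]; ring
      · show ee 5 = 0; rw [he5, hz]; ring
    set lam : ℝ := (x * x' + y * y' + z * z') / (x ^ 2 + y ^ 2 + z ^ 2) with hlam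
    have hx' : x' = lam * x := by
      rw [hlam]; field_simp
      linear_combination (-y) * hcr1 + (-z) * hcr2
    have hy' : y' = lam * y := by
      rw [hlam]; field_simp
      linear_combination x * hcr1 + (-z) * hcr3
    have hz' : z' = lam * z := by
      rw [hlam]; field_simp
      linear_combination x * hcr2 + y * hcr3
    set t : ℝ := ε * δ * lam ^ 2 with ht
    have htk : ∀ k, dd k = t * ee k := by
      intro k; fin_cases k
      · show dd 0 = t * ee 0
        rw [hd0, he0, hx', ht]; linear_combination (-(δ * lam ^ 2 * x ^ 2)) * hεsq
      · show dd 1 = t * ee 1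
        rw [hd1, he1, hx', hy', ht]; linear_combination (-(δ * lam ^ 2 * x * y)) * hεsq
      · show dd 2 = t * ee 2
        rw [hd2, he2, hx', hz', ht]; linear_combination (-(δ * lam ^ 2 * x * z)) * hεsq
      · show dd 3 = t * ee 3
        rw [hd3, he3, hy', ht]; linear_combination (-(δ * lam ^ 2 * y ^ 2)) * hεsq
      · show dd 4 = t * ee 4
        rw [hd4, he4, hy', hz', ht]; linear_combination (-(δ * lam ^ 2 * y * z)) * hεsq
      · show dd 5 = t * ee 5
        rw [hd5, he5, hz', ht]; linear_combination (-(δ * lam ^ 2 * z ^ 2)) * hεsq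
    -- choose the rotation angle
    have hr4 : (0:ℝ) < t ^ 2 + 4 := by positivity
    set r : ℝ := Real.sqrt (t ^ 2 + 4) with hrdef
    have hr : r ^ 2 = t ^ 2 + 4 := Real.sq_sqrt hr4.le
    set c₀ : ℝ := (r - t) / 2 with hc₀def
    have hc₀ : c₀ ^ 2 + t * c₀ - 1 = 0 := by
      rw [hc₀def]; linear_combination (1/4) * hr
    have hn4 : (0:ℝ) < c₀ ^ 2 + 1 := by positivity
    set n : ℝ := Real.sqrt (c₀ ^ 2 + 1) with hndef
    have hn : n ^ 2 = c₀ ^ 2 + 1 := Real.sq_sqrt hn4.le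
    have hnpos : 0 < n := by rw [hndef]; exact Real.sqrt_pos.mpr hn4
    have hn0 : n ≠ 0 := hnpos.ne'
    clear_value lam t r c₀ n
    refine ⟨c₀ / n, 1 / n, ?_, ?_, ?_⟩
    · field_simp
      linear_combination (-1 : ℝ) * hn
    · intro k
      rw [hG (c₀ / n) (1 / n) k, htk k]
      have hkey : ((c₀ / n) ^ 2 - (1 / n) ^ 2) + (c₀ / n) * (1 / n) * t = 0 := by
        field_simp
        linear_combination hc₀
      linear_combination (ee k) * hkey
    · intro k
      rw [hG (-(1 / n)) (c₀ / n) k, htk k]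
      have hkey : ((c₀ / n) ^ 2 - (1 / n) ^ 2) + (c₀ / n) * (1 / n) * t = 0 := by
        field_simp
        linear_combination hc₀
      linear_combination (-(ee k)) * hkey



/-- Every rank two element of the cone 𝒞 is a sum of two rank one matrices of
the form `v(x,y,z) v(x,y,z)ᵀ`. -/
theorem rank_two_memC (A : Matrix (Fin 6) (Fin 6) ℝ) (hA : memC A)
    (hrank : A.rank = 2) :
    ∃ x y z x' y' z' : ℝ,
      A = vecMulVec (v x y z) (v x y z) + vecMulVec (v x' y' z') (v x' y' z') := by
  obtain ⟨hpsd, h14, h15, h16, h25, h26, h46⟩ := hA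
  obtain ⟨u, w, hu⟩ := psd_rank_two_decomp A hpsd hrank
  rw [hu 0 3, hu 1 1] at h14
  rw [hu 0 4, hu 1 2] at h15
  rw [hu 0 5, hu 2 2] at h16
  rw [hu 1 4, hu 2 3] at h25
  rw [hu 1 5, hu 2 4] at h26
  rw [hu 3 5, hu 4 4] at h46
  have hcof : ∀ k, cof u k = - cof w k := by
    intro k; fin_cases k
    · show cof u 0 = - cof w 0; rw [cof0, cof0]; linear_combination h46
    · show cof u 1 = - cof w 1; rw [cof1, cof1]; linear_combination -h26
    · show cof u 2 = - cof w 2; rw [cof2, cof2]; linear_combination h25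
    · show cof u 3 = - cof w 3; rw [cof3, cof3]; linear_combination h16
    · show cof u 4 = - cof w 4; rw [cof4, cof4]; linear_combination -h15
    · show cof u 5 = - cof w 5; rw [cof5, cof5]; linear_combination h14
  obtain ⟨c, s, hcs, hcu, hcw⟩ := pencil_exists u w hcof
  obtain ⟨x, y, z, ε, hεsq, he0, he1, he2, he3, he4, he5⟩ :=
    rank1_scalar (c * u 0 + s * w 0) (c * u 1 + s * w 1) (c * u 2 + s * w 2)
      (c * u 3 + s * w 3) (c * u 4 + s * w 4) (c * u 5 + s * w 5)
      (by have := hcu 5; rw [cof5] at this; linarith)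
      (by have := hcu 4; rw [cof4] at this; linarith)
      (by have := hcu 3; rw [cof3] at this; linarith)
      (by have := hcu 2; rw [cof2] at this; linarith)
      (by have := hcu 1; rw [cof1] at this; linarith)
      (by have := hcu 0; rw [cof0] at this; linarith)
  obtain ⟨x', y', z', δ, hδsq, hf0, hf1, hf2, hf3, hf4, hf5⟩ :=
    rank1_scalar (-s * u 0 + c * w 0) (-s * u 1 + c * w 1) (-s * u 2 + c * w 2)
      (-s * u 3 + c * w 3) (-s * u 4 + c * w 4) (-s * u 5 + c * w 5)
      (by have := hcw 5; rw [cof5] at this; linarith)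
      (by have := hcw 4; rw [cof4] at this; linarith)
      (by have := hcw 3; rw [cof3] at this; linarith)
      (by have := hcw 2; rw [cof2] at this; linarith)
      (by have := hcw 1; rw [cof1] at this; linarith)
      (by have := hcw 0; rw [cof0] at this; linarith)
  have key1 : ∀ i, c * u i + s * w i = ε * v x y z i := by
    intro i; fin_cases i
    exacts [he0, he1, he2, he3, he4, he5]
  have key2 : ∀ i, -s * u i + c * w i = δ * v x' y' z' i := by
    intro i; fin_cases i
    exacts [hf0, hf1, hf2, hf3, hf4, hf5]
  refine ⟨x, y, z, x', y', z', ?_⟩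
  ext i j
  rw [Matrix.add_apply, Matrix.vecMulVec_apply, Matrix.vecMulVec_apply, hu i j]
  linear_combination (-(u i * u j + w i * w j)) * hcs
    + (c * u j + s * w j) * (key1 i) + (ε * v x y z i) * (key1 j)
    + (-s * u j + c * w j) * (key2 i) + (δ * v x' y' z' i) * (key2 j)
    + (v x y z i * v x y z j) * hεsq + (v x' y' z' i * v x' y' z' j) * hδsq
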